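/- Let V be a finite-dimensional complex Hermitian inner-product space and σ : W → End(V) a linear map from a real vector space W of positive dimension such that each σ(α) is skew-Hermitian and all operators σ(α), for α ≠ 0, are conjugate to each other in GL(V). Then σ = 0. -/

import Mathlib

/-!
STATEMENT 6 (linear-algebra core of Proposition 2.18).  Let `V` be a finite-dimensional
complex Hermitian inner-product space and `σ : W → End(V)` an `ℝ`-linear map from a real
vector space `W` of positive dimension (i.e. nontrivial) such that every `σ(α)` is
skew-Hermitian and all operators `σ(α)`, `α ≠ 0`, are conjugate to each other in `GL(V)`.
Then `σ = 0`.
-/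

theorem skew_hermitian_conjugate_family_is_zero
    (V : Type*) [NormedAddCommGroup V] [InnerProductSpace ℂ V] [FiniteDimensional ℂ V]
    (W : Type*) [AddCommGroup W] [Module ℝ W] [Nontrivial W]
    (σ : W → (V →ₗ[ℂ] V))
    -- ℝ-linearity of `σ`
    (hadd : ∀ α β : W, σ (α + β) = σ α + σ β)
    (hsmul : ∀ (a : ℝ) (α : W), σ (a • α) = (a : ℂ) • σ α)
    -- each `σ(α)` is skew-Hermitian
    (hskew : ∀ (α : W) (x y : V), inner ℂ (σ α x) y = - (inner ℂ x (σ α y) : ℂ))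
    -- all `σ(α)`, `α ≠ 0`, are conjugate to one another in `GL(V)`
    (hconj : ∀ α β : W, α ≠ 0 → β ≠ 0 → ∃ g : V ≃ₗ[ℂ] V,
        ∀ x : V, σ β x = g (σ α (g.symm x))) :
    ∀ α : W, σ α = 0 := by
  have hzero : σ 0 = 0 := by
    have := hsmul 0 0
    simpa using this
  intro α
  rcases eq_or_ne α 0 with rfl | hα
  · exact hzero
  set T := σ α with hT
  -- doubling of eigenvalues
  have hdouble : ∀ μ : ℂ, Module.End.HasEigenvalue T μ →
      Module.End.HasEigenvalue T (2 * μ) := by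
    intro μ hμ
    obtain ⟨v, hv⟩ := hμ.exists_hasEigenvector
    have h2α : (2 : ℝ) • α ≠ 0 := by
      intro h
      apply hα
      have := congrArg (fun w => (2 : ℝ)⁻¹ • w) h
      simpa [smul_smul] using this
    obtain ⟨g, hg⟩ := hconj ((2 : ℝ) • α) α h2α hα
    have hTv : T v = μ • v := hv.apply_eq_smul
    have h2T : σ ((2 : ℝ) • α) v = (2 * μ) • v := by
      rw [hsmul]
      have : ((2:ℝ):ℂ) = 2 := by norm_num
      rw [this]
      rw [LinearMap.smul_apply, ← hT, hTv, smul_smul]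
    have : T (g v) = (2 * μ) • g v := by
      have := hg (g v)
      rw [g.symm_apply_apply] at this
      rw [← hT] at this
      rw [this, h2T, map_smul]
    exact Module.End.hasEigenvalue_of_hasEigenvector
      ⟨by rwa [Module.End.mem_eigenspace_iff], by simp [hv.right]⟩
  -- eigenvalues are bounded
  have hbound : ∀ μ : ℂ, Module.End.HasEigenvalue T μ →
      ‖μ‖ ≤ ‖(LinearMap.toContinuousLinearMap T)‖ := by
    intro μ hμ
    obtain ⟨v, hv⟩ := hμ.exists_hasEigenvector
    have h1 : ‖μ‖ * ‖v‖ = ‖T v‖ := by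
      rw [hv.apply_eq_smul, norm_smul]
    have h2 : ‖T v‖ ≤ ‖(LinearMap.toContinuousLinearMap T)‖ * ‖v‖ :=
      (LinearMap.toContinuousLinearMap T).le_opNorm v
    have hvpos : 0 < ‖v‖ := norm_pos_iff.mpr hv.right
    nlinarith [h1, h2, hvpos]
  -- hence all eigenvalues are zero
  have heigzero : ∀ μ : ℂ, Module.End.HasEigenvalue T μ → μ = 0 := by
    intro μ hμ
    by_contra hne
    have hpow : ∀ n : ℕ, Module.End.HasEigenvalue T ((2 : ℂ) ^ n * μ) := by
      intro n
      induction n with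
      | zero => simpa using hμ
      | succ n ih =>
        have := hdouble _ ih
        have heq : 2 * ((2:ℂ)^n * μ) = (2:ℂ)^(n+1) * μ := by ring
        rwa [heq] at this
    set C := ‖(LinearMap.toContinuousLinearMap T)‖
    have hμpos : 0 < ‖μ‖ := norm_pos_iff.mpr hne
    obtain ⟨n, hn⟩ := pow_unbounded_of_one_lt (C / ‖μ‖) (by norm_num : (1:ℝ) < 2)
    have := hbound _ (hpow n)
    rw [norm_mul, norm_pow] at this
    have h2 : ‖(2:ℂ)‖ = 2 := by simp
    rw [h2] at this
    have hlt : C < 2 ^ n * ‖μ‖ := by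
      rwa [div_lt_iff₀ hμpos] at hn
    linarith
  -- S = I • T is symmetric
  set S : V →ₗ[ℂ] V := Complex.I • T with hS
  have hsym : S.IsSymmetric := by
    intro x y
    have h1 : (inner ℂ (S x) y : ℂ) = -Complex.I * inner ℂ (T x) y := by
      simp [hS, inner_smul_left, mul_comm]
    have h2 : (inner ℂ x (S y) : ℂ) = Complex.I * inner ℂ x (T y) := by
      simp [hS, inner_smul_right]
    rw [h1, h2, hskew α x y]
    ring
  have hcard : Module.finrank ℂ V = Module.finrank ℂ V := rfl
  -- show T = 0 using the eigenvector basis of S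
  have hSzero : ∀ i, S ((hsym.eigenvectorBasis hcard) i) = 0 := by
    intro i
    have hev := hsym.hasEigenvector_eigenvectorBasis hcard i
    have hvne := hev.right
    have hSv : S ((hsym.eigenvectorBasis hcard) i)
        = ((hsym.eigenvalues hcard i : ℂ)) • ((hsym.eigenvectorBasis hcard) i) :=
      hev.apply_eq_smul
    -- T v = (-I * μ) • v
    have hTv : T ((hsym.eigenvectorBasis hcard) i)
        = (-Complex.I * (hsym.eigenvalues hcard i : ℂ)) • ((hsym.eigenvectorBasis hcard) i) := by
      have : T = (-Complex.I) • S := by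
        rw [hS, smul_smul]
        simp [Complex.I_mul_I]
      rw [this]
      simp only [LinearMap.smul_apply, hSv, smul_smul]
    have hμev : Module.End.HasEigenvalue T (-Complex.I * (hsym.eigenvalues hcard i : ℂ)) :=
      Module.End.hasEigenvalue_of_hasEigenvector
        ⟨by rwa [Module.End.mem_eigenspace_iff], hvne⟩
    have := heigzero _ hμev
    have hμ0 : (hsym.eigenvalues hcard i : ℂ) = 0 := by
      field_simp at this
      simpa using this
    rw [hSv, hμ0, zero_smul]
  have hS0 : S = 0 := by
    apply (hsym.eigenvectorBasis hcard).toBasis.ext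
    intro i
    simp [hSzero i]
  have : T = (-Complex.I) • S := by
    rw [hS, smul_smul]
    simp [Complex.I_mul_I]
  rw [hT] at this ⊢
  rw [this, hS0, smul_zero]
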